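/- Assume G is connected and every complex eigenvalue λ ≠ 1 of F_Q satisfies |λ| < 1. Then for every initial vector x(0) ∈ ℝⁿ, the sequence defined by the iteration x(k+1) = F_Q x(k) + (1/2)(I − Q) D⁻¹ x̃ converges as k → ∞ to a limit x* ∈ ℝⁿ, and this limit satisfies 2 L x* = x̃; in particular, for every edge {i,j} the relative difference x*_i − x*_j coincides with x_i − x_j for any solution x of 2 L x = x̃. -/

import Mathlib

open Matrix Filter Finset

lemma conj_pow_aux {n : ℕ} (P Pinv M : Matrix (Fin n) (Fin n) ℝ)
    (h : P * Pinv = 1) (k : ℕ) : (P * M * Pinv) ^ k = P * M ^ k * Pinv := by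
  have h2 : Pinv * P = 1 := mul_eq_one_comm.mp h
  induction k with
  | zero => rw [pow_zero, pow_zero, mul_one, h]
  | succ k ih =>
      rw [pow_succ, ih, pow_succ]
      calc P * M ^ k * Pinv * (P * M * Pinv)
          = P * M ^ k * (Pinv * P) * (M * Pinv) := by noncomm_ring
        _ = P * (M ^ k * M) * Pinv := by rw [h2]; noncomm_ring

lemma lap_range {n : ℕ} (hn : 2 ≤ n) (G : SimpleGraph (Fin n)) [DecidableRel G.Adj]
    (hconn : G.Connected) (v : Fin n → ℝ) (hv : ∑ i, v i = 0) :
    ∃ y, (G.lapMatrix ℝ) *ᵥ y = v := by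
  classical
  set f := Matrix.toLin' (G.lapMatrix ℝ) with hf
  have hone : (fun _ => (1:ℝ)) ≠ (0 : Fin n → ℝ) := by
    intro h
    have := congrFun h ⟨0, by omega⟩
    simp at this
  have hker : LinearMap.ker f = Submodule.span ℝ {(fun _ => (1:ℝ))} := by
    apply le_antisymm
    · intro x hx
      rw [LinearMap.mem_ker, hf, Matrix.toLin'_apply,
        SimpleGraph.lapMatrix_mulVec_eq_zero_iff_forall_reachable] at hx
      rw [Submodule.mem_span_singleton]
      refine ⟨x ⟨0, by omega⟩, ?_⟩
      ext j
      simp [hx j ⟨0, by omega⟩ (hconn.preconnected j ⟨0, by omega⟩)]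
    · rw [Submodule.span_singleton_le_iff_mem, LinearMap.mem_ker, hf, Matrix.toLin'_apply]
      exact G.lapMatrix_mulVec_const_eq_zero
  have hkerrank : Module.finrank ℝ (LinearMap.ker f) = 1 := by
    rw [hker]
    exact finrank_span_singleton hone
  set g : (Fin n → ℝ) →ₗ[ℝ] ℝ := ∑ i, LinearMap.proj i with hg
  have hgapp : ∀ w : Fin n → ℝ, g w = ∑ i, w i := by
    intro w; simp [hg]
  have hcol : ∀ j, ∑ i, G.lapMatrix ℝ i j = 0 := by
    intro j
    have h1 := congrFun (G.lapMatrix_mulVec_const_eq_zero (R := ℝ)) j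
    simp only [Matrix.mulVec, dotProduct, mul_one, Pi.zero_apply] at h1
    rw [← h1]
    refine Finset.sum_congr rfl fun i _ => ?_
    have := (G.isSymm_lapMatrix (R := ℝ)).apply j i
    simpa using this
  have hle : LinearMap.range f ≤ LinearMap.ker g := by
    rintro _ ⟨x, rfl⟩
    rw [LinearMap.mem_ker, hgapp, hf, Matrix.toLin'_apply]
    simp only [Matrix.mulVec, dotProduct]
    rw [Finset.sum_comm]
    refine Finset.sum_eq_zero fun j _ => ?_
    rw [← Finset.sum_mul, hcol, zero_mul]
  have hgsurj : Function.Surjective g := by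
    intro r
    refine ⟨fun _ => r / n, ?_⟩
    rw [hgapp]
    simp
    field_simp
  have h1 : Module.finrank ℝ (LinearMap.range f) + Module.finrank ℝ (LinearMap.ker f)
      = n := by
    have := LinearMap.finrank_range_add_finrank_ker f
    simpa [Module.finrank_pi] using this
  have h2 : Module.finrank ℝ (LinearMap.range g) + Module.finrank ℝ (LinearMap.ker g)
      = n := by
    have := LinearMap.finrank_range_add_finrank_ker g
    simpa [Module.finrank_pi] using this
  have h3 : Module.finrank ℝ (LinearMap.range g) = 1 := by
    rw [LinearMap.range_eq_top.mpr hgsurj]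
    simp
  have heq : LinearMap.range f = LinearMap.ker g := by
    apply Submodule.eq_of_le_of_finrank_le hle
    omega
  have : v ∈ LinearMap.range f := by
    rw [heq, LinearMap.mem_ker, hgapp]; exact hv
  obtain ⟨y, hy⟩ := this
  exact ⟨y, by rw [← hy, hf, Matrix.toLin'_apply]⟩

theorem stmt_10 (n : ℕ) (hn : 2 ≤ n) (G : SimpleGraph (Fin n)) [DecidableRel G.Adj]
    (hdeg : ∀ i, 0 < G.degree i) (hconn : G.Connected)
    (q : Fin n → ℝ) (hq : ∀ i, q i < 1)
    (A D L F0 Q FQ : Matrix (Fin n) (Fin n) ℝ)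
    (hA : A = G.adjMatrix ℝ)
    (hD : D = Matrix.diagonal fun i => (G.degree i : ℝ))
    (hL : L = D - A)
    (hF0 : F0 = D⁻¹ * A)
    (hQ : Q = Matrix.diagonal q)
    (hFQ : FQ = Q + (1 - Q) * F0)
    (xt : Fin n → Fin n → ℝ) (xtv : Fin n → ℝ)
    (hxtv : xtv = fun i => ∑ j ∈ G.neighborFinset i, (xt j i - xt i j))
    (hspec : ∀ μ : ℂ,
      (∃ v : Fin n → ℂ, v ≠ 0 ∧ (FQ.map Complex.ofReal).mulVec v = μ • v) →
      μ ≠ 1 → ‖μ‖ < 1) :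
    ∀ (x0 : Fin n → ℝ) (x : ℕ → Fin n → ℝ),
      x 0 = x0 →
      (∀ k, x (k + 1) = FQ.mulVec (x k) + ((1 / 2 : ℝ) • ((1 - Q) * D⁻¹)).mulVec xtv) →
      ∃ xs : Fin n → ℝ,
        Tendsto x atTop (nhds xs) ∧
        (2 : ℝ) • L.mulVec xs = xtv ∧
        ∀ i j : Fin n, G.Adj i j →
          ∀ y : Fin n → ℝ, (2 : ℝ) • L.mulVec y = xtv → xs i - xs j = y i - y j := by
  classical
  intro x0 x hx0 hxrec
  -- basic data
  set d : Fin n → ℝ := fun i => (G.degree i : ℝ) with hd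
  have hdpos : ∀ i, 0 < d i := fun i => by
    simp only [hd]; exact_mod_cast hdeg i
  have hdne : ∀ i, d i ≠ 0 := fun i => (hdpos i).ne'
  have hDinv : D⁻¹ = Matrix.diagonal (fun i => (d i)⁻¹) := by
    apply Matrix.inv_eq_right_inv
    rw [hD, Matrix.diagonal_mul_diagonal, ← Matrix.diagonal_one]
    have : (fun i => d i * (d i)⁻¹) = fun _ => (1:ℝ) :=
      funext fun i => mul_inv_cancel₀ (hdne i)
    rw [this]
  set b : Fin n → ℝ := fun i => (1 - q i) * (d i)⁻¹ with hb
  have hbpos : ∀ i, 0 < b i := fun i =>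
    mul_pos (by linarith [hq i]) (inv_pos.mpr (hdpos i))
  set s : Fin n → ℝ := fun i => Real.sqrt (b i) with hs
  have hspos : ∀ i, 0 < s i := fun i => Real.sqrt_pos.mpr (hbpos i)
  have hss : ∀ i, s i * s i = b i := fun i => Real.mul_self_sqrt (hbpos i).le
  set S : Matrix (Fin n) (Fin n) ℝ := Matrix.diagonal s with hSdef
  set Sinv : Matrix (Fin n) (Fin n) ℝ := Matrix.diagonal (fun i => (s i)⁻¹) with hSinvdef
  have hSS : S * Sinv = 1 := by
    rw [hSdef, hSinvdef, Matrix.diagonal_mul_diagonal, ← Matrix.diagonal_one]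
    have : (fun i => s i * (s i)⁻¹) = fun _ => (1:ℝ) :=
      funext fun i => mul_inv_cancel₀ (hspos i).ne'
    rw [this]
  have hSS' : Sinv * S = 1 := mul_eq_one_comm.mp hSS
  have hSsq : S * S = Matrix.diagonal b := by
    rw [hSdef, Matrix.diagonal_mul_diagonal]
    have : (fun i => s i * s i) = b := funext hss
    rw [this]
  -- L is the Laplacian
  have hLlap : L = G.lapMatrix ℝ := by
    rw [hL, hD, hA, SimpleGraph.lapMatrix, SimpleGraph.degMatrix]
  -- key identity for (1-Q)*D⁻¹
  have hB : (1 - Q) * D⁻¹ = Matrix.diagonal b := by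
    rw [hQ, hDinv, ← Matrix.diagonal_one, Matrix.diagonal_sub, Matrix.diagonal_mul_diagonal]
  have hbD : Matrix.diagonal b * D = 1 - Q := by
    rw [hD, hQ, Matrix.diagonal_mul_diagonal, ← Matrix.diagonal_one, Matrix.diagonal_sub]
    have : (fun i => b i * d i) = fun i => 1 - q i := by
      funext i
      show (1 - q i) * (d i)⁻¹ * d i = 1 - q i
      exact inv_mul_cancel_right₀ (hdne i) _
    rw [this]
  -- FQ = 1 - diagonal b * L
  have hFQkey : FQ = 1 - Matrix.diagonal b * L := by
    rw [hFQ, hF0, hL, ← mul_assoc, hB, mul_sub, hbD]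
    noncomm_ring
  -- the symmetric conjugate
  set M : Matrix (Fin n) (Fin n) ℝ := 1 - S * L * S with hMdef
  have hMsymm : M.IsHermitian := by
    rw [Matrix.IsHermitian, Matrix.conjTranspose_eq_transpose_of_trivial, hMdef,
      Matrix.transpose_sub, Matrix.transpose_one, Matrix.transpose_mul, Matrix.transpose_mul,
      hSdef, Matrix.diagonal_transpose]
    have : Lᵀ = L := by rw [hLlap]; exact G.isSymm_lapMatrix (R := ℝ)
    rw [this, mul_assoc]
  have hFQM : FQ = S * M * Sinv := by
    rw [hFQkey, hMdef]
    rw [mul_sub, sub_mul, mul_one, hSS]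
    congr 1
    symm
    calc S * (S * L * S) * Sinv = (S * S) * L * (S * Sinv) := by noncomm_ring
      _ = Matrix.diagonal b * L := by rw [hSsq, hSS, mul_one]
  set lam : Fin n → ℝ := hMsymm.eigenvalues with hlam
  set U : Matrix (Fin n) (Fin n) ℝ := (hMsymm.eigenvectorUnitary : Matrix (Fin n) (Fin n) ℝ) with hU
  have hUU : U * star U = 1 :=
    Matrix.mem_unitaryGroup_iff.mp (hMsymm.eigenvectorUnitary).2
  have hMspec : M = U * Matrix.diagonal lam * star U := by
    have := hMsymm.spectral_theorem
    rwa [RCLike.ofReal_real_eq_id, Function.id_comp] at this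
  -- eigenvalues are 1 or small
  have heig : ∀ l, lam l = 1 ∨ |lam l| < 1 := by
    intro l
    by_cases h1 : lam l = 1
    · exact Or.inl h1
    · right
      set v : Fin n → ℝ := ⇑(hMsymm.eigenvectorBasis l) with hv
      have hveig : M *ᵥ v = lam l • v := hMsymm.mulVec_eigenvectorBasis l
      have hvne : v ≠ 0 := by
        intro h0
        exact hMsymm.eigenvectorBasis.orthonormal.ne_zero l (by ext i; exact congrFun h0 i)
      have hweig : FQ *ᵥ (S *ᵥ v) = lam l • (S *ᵥ v) := by
        rw [hFQM, mulVec_mulVec, mul_assoc (S * M) Sinv S, hSS', mul_one,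
          ← mulVec_mulVec, hveig, Matrix.mulVec_smul]
      have hSvne : S *ᵥ v ≠ 0 := by
        intro h0
        apply hvne
        have : Sinv *ᵥ (S *ᵥ v) = v := by rw [mulVec_mulVec, hSS', one_mulVec]
        rw [h0, Matrix.mulVec_zero] at this
        exact this.symm
      have key := hspec ((lam l : ℂ))
        ⟨fun i => ((S *ᵥ v) i : ℂ), ?_, ?_⟩ ?_
      · rwa [Complex.norm_real, Real.norm_eq_abs] at key
      · intro h0
        apply hSvne
        ext i
        have h5 := congrFun h0 i
        simpa using h5
      · ext i
        have h6 := (RingHom.map_mulVec Complex.ofRealHom FQ (S *ᵥ v) i).symm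
        calc ((FQ.map Complex.ofReal) *ᵥ fun i => ((S *ᵥ v) i : ℂ)) i
            = (FQ.map Complex.ofRealHom *ᵥ (Complex.ofRealHom ∘ (S *ᵥ v))) i := rfl
          _ = ((FQ *ᵥ (S *ᵥ v)) i : ℂ) := by rw [h6]; rfl
          _ = ((lam l : ℂ) • fun i => (((S *ᵥ v) i : ℝ) : ℂ)) i := by
              rw [hweig]
              simp
      · intro hc
        apply h1
        exact_mod_cast hc
  -- limits of eigenvalue powers
  set c : Fin n → ℝ := fun l => if lam l = 1 then 1 else 0 with hc
  have hck : ∀ l, Tendsto (fun k : ℕ => lam l ^ k) atTop (nhds (c l)) := by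
    intro l
    by_cases h1 : lam l = 1
    · simp [hc, h1]
    · simpa [hc, h1] using
        tendsto_pow_atTop_nhds_zero_of_abs_lt_one ((heig l).resolve_left h1)
  -- powers of FQ
  have hFQk : ∀ k, FQ ^ k = S * (U * Matrix.diagonal (fun l => lam l ^ k) * star U) * Sinv := by
    intro k
    rw [hFQM, conj_pow_aux _ _ _ hSS, hMspec, conj_pow_aux _ _ _ hUU, Matrix.diagonal_pow]
    rfl
  -- particular solution
  have hsum0 : ∑ i, xtv i = 0 := by
    have hrw : ∑ i, xtv i =
        ∑ i, ∑ j, if G.Adj i j then xt j i - xt i j else 0 := by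
      rw [hxtv]
      refine Finset.sum_congr rfl fun i _ => ?_
      simp only [SimpleGraph.neighborFinset_eq_filter, Finset.sum_filter]
    have hneg : ∑ i, xtv i = - ∑ i, xtv i := by
      conv_lhs => rw [hrw, Finset.sum_comm]
      rw [hrw, ← Finset.sum_neg_distrib]
      refine Finset.sum_congr rfl fun i _ => ?_
      rw [← Finset.sum_neg_distrib]
      refine Finset.sum_congr rfl fun j _ => ?_
      by_cases h : G.Adj i j
      · rw [if_pos ((G.adj_comm i j).mp h), if_pos h]; ring
      · rw [if_neg (fun hh => h ((G.adj_comm j i).mp hh)), if_neg h]; ring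
    linarith
  obtain ⟨y, hy⟩ : ∃ y, L *ᵥ y = (1/2 : ℝ) • xtv := by
    obtain ⟨y, hy⟩ := lap_range hn G hconn ((1/2 : ℝ) • xtv) (by
      simp only [Pi.smul_apply, smul_eq_mul, ← Finset.mul_sum, hsum0, mul_zero])
    exact ⟨y, by rw [hLlap]; exact hy⟩
  -- fixed point property of y
  have hcvec : ((1/2 : ℝ) • ((1 - Q) * D⁻¹)) *ᵥ xtv
      = Matrix.diagonal b *ᵥ ((1/2 : ℝ) • xtv) := by
    rw [hB, Matrix.smul_mulVec, Matrix.mulVec_smul]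
  have hfix : FQ *ᵥ y + ((1/2 : ℝ) • ((1 - Q) * D⁻¹)) *ᵥ xtv = y := by
    rw [hcvec, hFQkey, Matrix.sub_mulVec, Matrix.one_mulVec, ← mulVec_mulVec, hy]
    abel
  -- closed form of the iteration
  have hclosed : ∀ k, x k = y + (FQ ^ k) *ᵥ (x0 - y) := by
    intro k
    induction k with
    | zero => rw [hx0, pow_zero, Matrix.one_mulVec]; abel
    | succ k ih =>
        rw [hxrec k, ih, Matrix.mulVec_add, pow_succ']
        rw [← mulVec_mulVec]
        have : FQ *ᵥ y + ((1/2 : ℝ) • ((1 - Q) * D⁻¹)) *ᵥ xtv = y := hfix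
        calc FQ *ᵥ y + FQ *ᵥ ((FQ ^ k) *ᵥ (x0 - y)) + ((1/2:ℝ) • ((1 - Q) * D⁻¹)) *ᵥ xtv
            = (FQ *ᵥ y + ((1/2:ℝ) • ((1 - Q) * D⁻¹)) *ᵥ xtv) + FQ *ᵥ ((FQ ^ k) *ᵥ (x0 - y)) := by
              abel
          _ = y + FQ *ᵥ ((FQ ^ k) *ᵥ (x0 - y)) := by rw [this]
  -- the limit
  set w : Fin n → ℝ := x0 - y with hw
  set u : Fin n → ℝ := (star U * Sinv) *ᵥ w with hu
  have hassoc : ∀ Dg : Matrix (Fin n) (Fin n) ℝ,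
      S * (U * Dg * star U) * Sinv = (S * U) * Dg * (star U * Sinv) := by
    intro Dg; noncomm_ring
  have hterm : ∀ k, (FQ ^ k) *ᵥ w
      = (S * U) *ᵥ (Matrix.diagonal (fun l => lam l ^ k) *ᵥ u) := by
    intro k
    rw [hFQk k, hassoc, ← mulVec_mulVec, ← mulVec_mulVec]
  set zlim : Fin n → ℝ := (S * U) *ᵥ (Matrix.diagonal c *ᵥ u) with hzlim
  have hdiagtend : Tendsto (fun k : ℕ => Matrix.diagonal (fun l => lam l ^ k) *ᵥ u)
      atTop (nhds (Matrix.diagonal c *ᵥ u)) := by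
    rw [tendsto_pi_nhds]
    intro l
    simp only [Matrix.mulVec_diagonal]
    exact (hck l).mul_const _
  have hcont : Continuous fun z : Fin n → ℝ => (S * U) *ᵥ z :=
    LinearMap.continuous_of_finiteDimensional (Matrix.mulVecLin (S * U))
  have htend2 : Tendsto (fun k : ℕ => (FQ ^ k) *ᵥ w) atTop (nhds zlim) := by
    simp only [hterm]
    exact (hcont.tendsto _).comp hdiagtend
  set xs : Fin n → ℝ := y + zlim with hxs
  have hxtend : Tendsto x atTop (nhds xs) := by
    have : ∀ k, x k = y + (FQ ^ k) *ᵥ w := hclosed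
    simp only [funext this]
    exact tendsto_const_nhds.add htend2
  -- L applied to zlim is zero
  have hLSv : ∀ l, lam l = 1 → (L * S) *ᵥ ⇑(hMsymm.eigenvectorBasis l) = 0 := by
    intro l h1
    have hveig := hMsymm.mulVec_eigenvectorBasis l
    rw [← hlam, h1, one_smul] at hveig
    have h9 : (1 - S * L * S) *ᵥ ⇑(hMsymm.eigenvectorBasis l)
        = ⇑(hMsymm.eigenvectorBasis l) := by
      rw [← hMdef]; exact hveig
    rw [Matrix.sub_mulVec, Matrix.one_mulVec, sub_eq_self] at h9
    have h2 : Sinv *ᵥ ((S * L * S) *ᵥ ⇑(hMsymm.eigenvectorBasis l)) = 0 := by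
      rw [h9, Matrix.mulVec_zero]
    rwa [mulVec_mulVec, ← mul_assoc, ← mul_assoc, hSS', one_mul] at h2
  have hP0 : L * S * U * Matrix.diagonal c = 0 := by
    ext j l
    rw [Matrix.mul_diagonal]
    by_cases h1 : lam l = 1
    · have h3 : (L * S * U) *ᵥ Pi.single l 1 = 0 := by
        rw [← mulVec_mulVec]
        have : U *ᵥ Pi.single l 1 = ⇑(hMsymm.eigenvectorBasis l) :=
          hMsymm.eigenvectorUnitary_mulVec l
        rw [this]
        exact hLSv l h1
      have h4 := congrFun h3 j
      rw [Matrix.mulVec_single_one] at h4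
      simp only [Matrix.col_apply] at h4
      simp [h4]
    · simp [hc, h1]
  have hLz : L *ᵥ zlim = 0 := by
    have h7 : L *ᵥ zlim = (L * (S * U) * Matrix.diagonal c) *ᵥ u := by
      rw [hzlim, mulVec_mulVec, mulVec_mulVec]
    have h8 : L * (S * U) * Matrix.diagonal c = L * S * U * Matrix.diagonal c := by
      noncomm_ring
    rw [h7, h8, hP0, Matrix.zero_mulVec]
  -- conclusion
  refine ⟨xs, hxtend, ?_, ?_⟩
  · rw [hxs, Matrix.mulVec_add, hLz, add_zero, hy, smul_smul]
    norm_num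
  · intro i j _ y' hy'
    have h2 : L *ᵥ xs = L *ᵥ y' := by
      have hxs2 : (2:ℝ) • L *ᵥ xs = xtv := by
        rw [hxs, Matrix.mulVec_add, hLz, add_zero, hy, smul_smul]
        norm_num
      have := hxs2.trans hy'.symm
      exact smul_right_injective _ (by norm_num : (2:ℝ) ≠ 0) this
    have hker : L *ᵥ (xs - y') = 0 := by
      rw [Matrix.mulVec_sub, h2, sub_self]
    have hreach := (SimpleGraph.lapMatrix_mulVec_eq_zero_iff_forall_reachable
      G (x := xs - y')).mp (by rw [← hLlap]; exact hker) i j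
      (hconn.preconnected i j)
    simp only [Pi.sub_apply] at hreach
    linarith
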